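/- arXiv:1901.10255 — 4 statements merged into one kernel-verified Lean document; each statement's English description precedes it below -/
import Mathlib

section
/- Let c₁,...,cₙ be i.i.d. real random variables with c_j ~ N(0, σ²), let d₁,...,dₙ be i.i.d. uniform on {−1, +1} independent of the c_j, let C = circ(c₁,...,cₙ), D = diag(d₁,...,dₙ), and let u ∈ ℝⁿ be a fixed vector. Define y = DCu. Then for i ≠ i′, cov(y_i, y_{i′}) = 0, and for every i, var(y_i) = σ² · Σ_j u_j². -/
open MeasureTheory ProbabilityTheory
open scoped ENNReal NNReal

/-- Covariance of two real random variables: `E[XY] − E[X]E[Y]`. -/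
noncomputable def rcov {Ω : Type*} [MeasurableSpace Ω] (X Y : Ω → ℝ) (μ : Measure Ω) : ℝ :=
  (∫ ω, X ω * Y ω ∂μ) - (∫ ω, X ω ∂μ) * (∫ ω, Y ω ∂μ)


section Aux
open Real Filter
open scoped Topology

lemma tendsto_exp_neg_sq_atTop {b : ℝ} (hb : 0 < b) :
    Tendsto (fun x : ℝ => rexp (-b * x ^ 2)) atTop (nhds 0) := by
  have h1 : Tendsto (fun x : ℝ => -b * x ^ 2) atTop atBot := by
    have h2 : Tendsto (fun x : ℝ => b * x ^ 2) atTop atTop :=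
      (tendsto_pow_atTop two_ne_zero).const_mul_atTop hb
    have := tendsto_neg_atTop_atBot.comp h2
    simpa [Function.comp_def, neg_mul] using this
  exact Real.tendsto_exp_atBot.comp h1

lemma tendsto_exp_neg_sq_atBot {b : ℝ} (hb : 0 < b) :
    Tendsto (fun x : ℝ => rexp (-b * x ^ 2)) atBot (nhds 0) := by
  have h := (tendsto_exp_neg_sq_atTop hb).comp tendsto_neg_atBot_atTop
  simpa [Function.comp_def, neg_sq] using h

lemma tendsto_mul_exp_neg_sq_atTop {b : ℝ} (hb : 0 < b) :
    Tendsto (fun x : ℝ => x * rexp (-b * x ^ 2)) atTop (nhds 0) := by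
  have h := rpow_mul_exp_neg_mul_sq_isLittleO_exp_neg hb 1
  simp only [Real.rpow_one] at h
  refine h.isBigO.trans_tendsto ?_
  have h1 : Tendsto (fun x : ℝ => -(1/2) * x) atTop atBot := by
    have h2 : Tendsto (fun x : ℝ => (1/2 : ℝ) * x) atTop atTop :=
      tendsto_id.const_mul_atTop (by norm_num)
    have := tendsto_neg_atTop_atBot.comp h2
    simpa [Function.comp_def, neg_mul] using this
  exact Real.tendsto_exp_atBot.comp h1

lemma tendsto_mul_exp_neg_sq_atBot {b : ℝ} (hb : 0 < b) :
    Tendsto (fun x : ℝ => x * rexp (-b * x ^ 2)) atBot (nhds 0) := by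
  have h := ((tendsto_mul_exp_neg_sq_atTop hb).comp tendsto_neg_atBot_atTop).neg
  simp only [Function.comp_def, neg_sq, neg_mul, neg_neg, neg_zero] at h
  simpa [neg_mul] using h

lemma integrable_sq_mul_exp_neg_mul_sq {b : ℝ} (hb : 0 < b) :
    Integrable (fun x : ℝ => x ^ 2 * rexp (-b * x ^ 2)) := by
  have h := integrable_rpow_mul_exp_neg_mul_sq hb (by norm_num : (-1:ℝ) < 2)
  have h2 : ∀ x : ℝ, x ^ (2:ℝ) = x ^ 2 := fun x => by
    rw [show (2:ℝ) = ((2:ℕ):ℝ) by norm_num, Real.rpow_natCast]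
  simpa [h2] using h

lemma integral_self_mul_exp_neg_mul_sq {b : ℝ} (hb : 0 < b) :
    ∫ x : ℝ, x * rexp (-b * x ^ 2) = 0 := by
  have hd : ∀ x : ℝ, HasDerivAt (fun y : ℝ => -(2*b)⁻¹ * rexp (-b * y ^ 2))
      (x * rexp (-b * x ^ 2)) x := by
    intro x
    have h1 : HasDerivAt (fun y : ℝ => -b * y ^ 2) (-b * (2 * x)) x := by
      simpa using (hasDerivAt_pow 2 x).const_mul (-b)
    have h2 := (h1.exp).const_mul (-(2*b)⁻¹)
    convert h2 using 1
    · rfl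
    · rfl
    field_simp
  have := integral_of_hasDerivAt_of_tendsto hd (integrable_mul_exp_neg_mul_sq hb)
    (by simpa using (tendsto_exp_neg_sq_atBot hb).const_mul (-(2*b)⁻¹))
    (by simpa using (tendsto_exp_neg_sq_atTop hb).const_mul (-(2*b)⁻¹))
  simpa using this

lemma integral_sq_mul_exp_neg_mul_sq {b : ℝ} (hb : 0 < b) :
    ∫ x : ℝ, x ^ 2 * rexp (-b * x ^ 2) = Real.sqrt (π / b) / (2 * b) := by
  have hd : ∀ x : ℝ, HasDerivAt (fun y : ℝ => y * rexp (-b * y ^ 2))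
      (rexp (-b * x ^ 2) - 2 * b * (x ^ 2 * rexp (-b * x ^ 2))) x := by
    intro x
    have h1 : HasDerivAt (fun y : ℝ => -b * y ^ 2) (-b * (2 * x)) x := by
      simpa using (hasDerivAt_pow 2 x).const_mul (-b)
    have h2 := (hasDerivAt_id x).mul h1.exp
    convert h2 using 1
    · rfl
    · rfl
    · funext y; rfl
    simp only [id]
    ring
  have hint : Integrable (fun x : ℝ =>
      rexp (-b * x ^ 2) - 2 * b * (x ^ 2 * rexp (-b * x ^ 2))) :=
    (integrable_exp_neg_mul_sq hb).sub ((integrable_sq_mul_exp_neg_mul_sq hb).const_mul (2*b))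
  have h0 := integral_of_hasDerivAt_of_tendsto hd hint
    (tendsto_mul_exp_neg_sq_atBot hb) (tendsto_mul_exp_neg_sq_atTop hb)
  rw [sub_zero, integral_sub (integrable_exp_neg_mul_sq hb)
    ((integrable_sq_mul_exp_neg_mul_sq hb).const_mul (2*b)),
    integral_const_mul, integral_gaussian] at h0
  have hb' : (2:ℝ) * b ≠ 0 := by positivity
  field_simp at h0 ⊢
  linarith

lemma gaussianPDF_eq_coe (v : ℝ≥0) :
    gaussianPDF 0 v = fun x => ((Real.toNNReal (gaussianPDFReal 0 v x) : ℝ≥0) : ℝ≥0∞) := rfl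

lemma integral_gaussianReal_eq (v : ℝ≥0) (hv : v ≠ 0) (g : ℝ → ℝ) :
    ∫ x, g x ∂(gaussianReal 0 v) = ∫ x, gaussianPDFReal 0 v x * g x := by
  rw [gaussianReal_of_var_ne_zero _ hv, gaussianPDF_eq_coe,
    integral_withDensity_eq_integral_smul ((measurable_gaussianPDFReal 0 v).real_toNNReal) g]
  congr 1
  funext x
  rw [NNReal.smul_def, Real.coe_toNNReal _ (gaussianPDFReal_nonneg _ _ _), smul_eq_mul]

lemma pdf_mul_eq (v : ℝ≥0) (hv : v ≠ 0) (g : ℝ → ℝ) :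
    (fun x => gaussianPDFReal 0 v x * g x)
      = fun x => (Real.sqrt (2 * π * v))⁻¹ * (rexp (-(2 * (v:ℝ))⁻¹ * x ^ 2) * g x) := by
  have hv' : (v:ℝ) ≠ 0 := by exact_mod_cast hv
  funext x
  rw [gaussianPDFReal, sub_zero]
  have : -x ^ 2 / (2 * (v:ℝ)) = -(2 * (v:ℝ))⁻¹ * x ^ 2 := by
    field_simp
  rw [this, mul_assoc]

lemma integral_id_gaussianReal0 (v : ℝ≥0) : ∫ x, x ∂(gaussianReal 0 v) = 0 := by
  by_cases hv : v = 0
  · simp [hv, integral_dirac]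
  · have hv' : (0:ℝ) < (v:ℝ) := NNReal.coe_pos.mpr (pos_iff_ne_zero.mpr hv)
    have hb : (0:ℝ) < (2 * (v:ℝ))⁻¹ := by positivity
    rw [integral_gaussianReal_eq v hv _, pdf_mul_eq v hv _]
    have : (fun x : ℝ => (Real.sqrt (2 * π * v))⁻¹ * (rexp (-(2 * (v:ℝ))⁻¹ * x ^ 2) * x))
        = fun x : ℝ => (Real.sqrt (2 * π * v))⁻¹ * (x * rexp (-(2 * (v:ℝ))⁻¹ * x ^ 2)) := by
      funext x; ring
    rw [this, integral_const_mul, integral_self_mul_exp_neg_mul_sq hb, mul_zero]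

lemma integral_sq_gaussianReal0 (v : ℝ≥0) : ∫ x, x * x ∂(gaussianReal 0 v) = (v:ℝ) := by
  by_cases hv : v = 0
  · simp [hv, integral_dirac]
  · have hv' : (0:ℝ) < (v:ℝ) := NNReal.coe_pos.mpr (pos_iff_ne_zero.mpr hv)
    have hb : (0:ℝ) < (2 * (v:ℝ))⁻¹ := by positivity
    rw [integral_gaussianReal_eq v hv _, pdf_mul_eq v hv _]
    have : (fun x : ℝ => (Real.sqrt (2 * π * v))⁻¹ * (rexp (-(2 * (v:ℝ))⁻¹ * x ^ 2) * (x * x)))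
        = fun x : ℝ => (Real.sqrt (2 * π * v))⁻¹ * (x ^ 2 * rexp (-(2 * (v:ℝ))⁻¹ * x ^ 2)) := by
      funext x; ring
    rw [this, integral_const_mul, integral_sq_mul_exp_neg_mul_sq hb]
    have h1 : π / (2 * (v:ℝ))⁻¹ = 2 * π * (v:ℝ) := by
      field_simp
    have h2 : 2 * (2 * (v:ℝ))⁻¹ = (v:ℝ)⁻¹ := by
      field_simp
    rw [h1, h2]
    have hs : Real.sqrt (2 * π * (v:ℝ)) ≠ 0 :=
      ne_of_gt (Real.sqrt_pos.mpr (by positivity))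
    field_simp

lemma integrable_sq_gaussianReal0 (v : ℝ≥0) :
    Integrable (fun x : ℝ => x * x) (gaussianReal 0 v) := by
  by_cases hv : v = 0
  · simp only [hv, gaussianReal_zero_var]
    exact (integrable_const ((0:ℝ) * 0)).congr (ae_eq_dirac (fun x : ℝ => x * x)).symm
  · have hv' : (0:ℝ) < (v:ℝ) := NNReal.coe_pos.mpr (pos_iff_ne_zero.mpr hv)
    have hb : (0:ℝ) < (2 * (v:ℝ))⁻¹ := by positivity
    rw [gaussianReal_of_var_ne_zero _ hv, gaussianPDF_eq_coe,
      integrable_withDensity_iff_integrable_smul ((measurable_gaussianPDFReal 0 v).real_toNNReal)]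
    have he : (fun x : ℝ => (Real.toNNReal (gaussianPDFReal 0 v x)) • (x * x))
        = fun x : ℝ => (Real.sqrt (2 * π * v))⁻¹ * (rexp (-(2 * (v:ℝ))⁻¹ * x ^ 2) * (x * x)) := by
      have := pdf_mul_eq v hv (fun x => x * x)
      funext x
      have hx := congrFun this x
      rw [NNReal.smul_def, Real.coe_toNNReal _ (gaussianPDFReal_nonneg _ _ _), smul_eq_mul, hx]
    rw [he]
    have : (fun x : ℝ => (Real.sqrt (2 * π * v))⁻¹ * (rexp (-(2 * (v:ℝ))⁻¹ * x ^ 2) * (x * x)))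
        = fun x : ℝ => (Real.sqrt (2 * π * v))⁻¹ * (x ^ 2 * rexp (-(2 * (v:ℝ))⁻¹ * x ^ 2)) := by
      funext x; ring
    rw [this]
    exact (integrable_sq_mul_exp_neg_mul_sq hb).const_mul _

lemma integral_sign_measure (f : ℝ → ℝ) :
    ∫ x, f x ∂((2 : ℝ≥0∞)⁻¹ • (Measure.dirac (-1) + Measure.dirac 1))
      = 2⁻¹ * (f (-1) + f 1) := by
  have h1 : Integrable f (Measure.dirac (-1 : ℝ)) :=
    (integrable_const (f (-1))).congr (ae_eq_dirac f).symm
  have h2 : Integrable f (Measure.dirac (1 : ℝ)) :=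
    (integrable_const (f 1)).congr (ae_eq_dirac f).symm
  rw [integral_smul_measure, integral_add_measure h1 h2, integral_dirac, integral_dirac]
  simp [ENNReal.toReal_inv]

lemma indep_one_three {Ω ι : Type*} [MeasurableSpace Ω] [DecidableEq ι] {μ : Measure Ω}
    {f : ι → Ω → ℝ}
    (hindep : iIndepFun f μ)
    (hm : ∀ i, Measurable (f i)) (i a b k : ι) (hia : i ≠ a) (hib : i ≠ b) (hik : i ≠ k) :
    IndepFun (f i) (fun ω => f a ω * f b ω * f k ω) μ := by
  have h := hindep.indepFun_finset {i} {a, b, k}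
    (by simp [Finset.disjoint_left, hia, hib, hik]) hm
  exact h.comp
    (show Measurable fun v : (({i} : Finset ι) → ℝ) => v ⟨i, by simp⟩ from
      measurable_pi_apply _)
    (show Measurable fun v : (({a, b, k} : Finset ι) → ℝ) =>
        v ⟨a, by simp⟩ * v ⟨b, by simp⟩ * v ⟨k, by simp⟩ from
      ((measurable_pi_apply (⟨a, by simp⟩ : ({a, b, k} : Finset ι))).mul
        (measurable_pi_apply (⟨b, by simp⟩ : ({a, b, k} : Finset ι)))).mul
        (measurable_pi_apply (⟨k, by simp⟩ : ({a, b, k} : Finset ι))))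

lemma integrable_mul_of_memL2 {Ω : Type*} [MeasurableSpace Ω] {μ : Measure Ω}
    [IsFiniteMeasure μ] {f g : Ω → ℝ} (hf : MemLp f 2 μ) (hg : MemLp g 2 μ) :
    Integrable (fun ω => f ω * g ω) μ := by
  have h1 := hf.integrable_sq
  have h2 := hg.integrable_sq
  refine ((h1.add h2).div_const 2).mono'
    (hf.aestronglyMeasurable.mul hg.aestronglyMeasurable) ?_
  filter_upwards with ω
  simp only [Pi.add_apply, Real.norm_eq_abs, abs_mul]
  nlinarith [two_mul_le_add_sq (|f ω|) (|g ω|), sq_abs (f ω), sq_abs (g ω),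
    abs_nonneg (f ω), abs_nonneg (g ω)]

end Aux

/-- With `C = circ(c)` for i.i.d. Gaussian `c_j ~ N(0,σ²)`, `D = diag(d)` for i.i.d.
uniform signs `d_j ∈ {−1,1}` independent of `c`, and a fixed vector `u`, the vector
`y = DCu` (with `y_i = Σ_j c_{(j−i) mod n} u_j d_j`) has uncorrelated coordinates with
`var(y_i) = σ² Σ_j u_j²`. -/
theorem diag_circ_gaussian_cov {Ω : Type*} [MeasurableSpace Ω] (μ : Measure Ω)
    [IsProbabilityMeasure μ] (n : ℕ) [NeZero n]
    (c d : Fin n → Ω → ℝ) (σ2 : ℝ≥0) (u : Fin n → ℝ)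
    (hcm : ∀ j, Measurable (c j)) (hdm : ∀ j, Measurable (d j))
    (hc : ∀ j, Measure.map (c j) μ = gaussianReal 0 σ2)
    (hd : ∀ j, Measure.map (d j) μ =
      (2 : ℝ≥0∞)⁻¹ • (Measure.dirac (-1) + Measure.dirac 1))
    (hindep : iIndepFun
      (Sum.elim c d) μ)
    (y : Fin n → Ω → ℝ)
    (hy : ∀ i, y i = fun ω => ∑ j : Fin n, c (j - i) ω * u j * d j ω) :
    (∀ i i' : Fin n, i ≠ i' → rcov (y i) (y i') μ = 0) ∧
      (∀ i : Fin n, variance (y i) μ = (σ2 : ℝ) * ∑ j, u j ^ 2) := by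
  classical
  have hfm : ∀ p : Fin n ⊕ Fin n, Measurable (Sum.elim c d p) := by
    rintro (a | a)
    exacts [hcm a, hdm a]
  -- first and second moments
  have hEc : ∀ a, ∫ ω, c a ω ∂μ = 0 := by
    intro a
    have h := integral_map (μ := μ) (hcm a).aemeasurable
      (f := fun x : ℝ => x) measurable_id.aestronglyMeasurable
    rw [← h, hc a]
    exact integral_id_gaussianReal0 σ2
  have hEc2 : ∀ a, ∫ ω, c a ω * c a ω ∂μ = (σ2:ℝ) := by
    intro a
    have h := integral_map (μ := μ) (hcm a).aemeasurable
      (f := fun x : ℝ => x * x) (measurable_id.mul measurable_id).aestronglyMeasurable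
    rw [← h, hc a]
    exact integral_sq_gaussianReal0 σ2
  have hEd : ∀ a, ∫ ω, d a ω ∂μ = 0 := by
    intro a
    have h := integral_map (μ := μ) (hdm a).aemeasurable
      (f := fun x : ℝ => x) measurable_id.aestronglyMeasurable
    rw [← h, hd a, integral_sign_measure (fun x => x)]
    norm_num
  have hEd2 : ∀ a, ∫ ω, d a ω * d a ω ∂μ = 1 := by
    intro a
    have h := integral_map (μ := μ) (hdm a).aemeasurable
      (f := fun x : ℝ => x * x) (measurable_id.mul measurable_id).aestronglyMeasurable
    rw [← h, hd a, integral_sign_measure (fun x => x * x)]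
    norm_num
  -- square integrability
  have hcL2 : ∀ a, MemLp (c a) 2 μ := by
    intro a
    have h := memLp_map_measure_iff (μ := μ) (f := c a) (g := fun x : ℝ => x) (p := 2)
      aestronglyMeasurable_id (hcm a).aemeasurable
    refine h.mp ?_
    rw [hc a]
    exact (memLp_two_iff_integrable_sq aestronglyMeasurable_id).mpr
      (by simpa [pow_two] using integrable_sq_gaussianReal0 σ2)
  have hdae : ∀ a, ∀ᵐ ω ∂μ, d a ω = -1 ∨ d a ω = 1 := by
    intro a
    have hS : MeasurableSet (({-1, 1} : Set ℝ)ᶜ) := by measurability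
    have hpre : μ (d a ⁻¹' (({-1, 1} : Set ℝ)ᶜ)) = 0 := by
      rw [← Measure.map_apply (hdm a) hS, hd a]
      simp [Measure.dirac_apply' _ hS, Set.indicator_apply]
    have hset : {ω | ¬(d a ω = -1 ∨ d a ω = 1)} = d a ⁻¹' (({-1, 1} : Set ℝ)ᶜ) := by
      ext ω
      simp [not_or]
    rw [ae_iff, hset]
    exact hpre
  have hdL2 : ∀ a, MemLp (d a) 2 μ := by
    intro a
    refine MemLp.of_le (memLp_const (1:ℝ)) (hdm a).aestronglyMeasurable ?_
    filter_upwards [hdae a] with ω h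
    rcases h with h | h <;> simp [h]
  have htL2 : ∀ i j : Fin n, MemLp (fun ω => c (j - i) ω * u j * d j ω) 2 μ := by
    intro i j
    refine MemLp.of_le ((hcL2 (j - i)).const_mul (u j))
      (((hcm _).mul_const _).mul (hdm j)).aestronglyMeasurable ?_
    filter_upwards [hdae j] with ω h
    rcases h with h | h <;>
      · rw [h]
        simp [Real.norm_eq_abs, abs_mul, mul_comm]
  have hti : ∀ i j : Fin n, Integrable (fun ω => c (j - i) ω * u j * d j ω) μ :=
    fun i j => (htL2 i j).integrable one_le_two
  have hmul : ∀ i i' j k : Fin n, Integrable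
      (fun ω => (c (j - i) ω * u j * d j ω) * (c (k - i') ω * u k * d k ω)) μ :=
    fun i i' j k => integrable_mul_of_memL2 (htL2 i j) (htL2 i' k)
  -- mean zero
  have hE0 : ∀ i, ∫ ω, y i ω ∂μ = 0 := by
    intro i
    simp only [hy]
    rw [integral_finset_sum _ fun j _ => hti i j]
    refine Finset.sum_eq_zero fun j _ => ?_
    have hI : IndepFun (c (j - i)) (d j) μ :=
      hindep.indepFun (show (Sum.inl (j - i) : Fin n ⊕ Fin n) ≠ Sum.inr j by simp)
    have h1 : ∫ ω, c (j - i) ω * u j * d j ω ∂μ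
        = u j * ∫ ω, c (j - i) ω * d j ω ∂μ := by
      rw [← integral_const_mul]
      congr 1
      funext ω
      ring
    rw [h1, hI.integral_fun_mul_eq_mul_integral (hcm _).aestronglyMeasurable (hdm _).aestronglyMeasurable,
      hEc, zero_mul, mul_zero]
  -- off-diagonal (j ≠ k) terms vanish
  have key0 : ∀ i i' j k : Fin n, j ≠ k →
      ∫ ω, (c (j - i) ω * u j * d j ω) * (c (k - i') ω * u k * d k ω) ∂μ = 0 := by
    intro i i' j k hjk
    have hI : IndepFun (d j) (fun ω => c (j - i) ω * c (k - i') ω * d k ω) μ :=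
      indep_one_three hindep hfm (Sum.inr j) (Sum.inl (j - i)) (Sum.inl (k - i'))
        (Sum.inr k) (by simp) (by simp) (by simpa using hjk)
    have h1 : ∫ ω, (c (j - i) ω * u j * d j ω) * (c (k - i') ω * u k * d k ω) ∂μ
        = (u j * u k) * ∫ ω, d j ω * (c (j - i) ω * c (k - i') ω * d k ω) ∂μ := by
      rw [← integral_const_mul]
      congr 1
      funext ω
      ring
    rw [h1, hI.integral_fun_mul_eq_mul_integral (hdm j).aestronglyMeasurable
      (((hcm _).mul (hcm _)).mul (hdm _)).aestronglyMeasurable, hEd, zero_mul, mul_zero]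
  -- diagonal term, different rows
  have key1 : ∀ i i' j : Fin n, i ≠ i' →
      ∫ ω, (c (j - i) ω * u j * d j ω) * (c (j - i') ω * u j * d j ω) ∂μ = 0 := by
    intro i i' j hii'
    have hab : j - i ≠ j - i' := fun h => hii' (sub_right_injective h)
    have hI : IndepFun (c (j - i)) (fun ω => c (j - i') ω * d j ω * d j ω) μ :=
      indep_one_three hindep hfm (Sum.inl (j - i)) (Sum.inl (j - i')) (Sum.inr j)
        (Sum.inr j) (by simpa using hab) (by simp) (by simp)
    have h1 : ∫ ω, (c (j - i) ω * u j * d j ω) * (c (j - i') ω * u j * d j ω) ∂μ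
        = (u j * u j) * ∫ ω, c (j - i) ω * (c (j - i') ω * d j ω * d j ω) ∂μ := by
      rw [← integral_const_mul]
      congr 1
      funext ω
      ring
    rw [h1, hI.integral_fun_mul_eq_mul_integral (hcm _).aestronglyMeasurable
      (((hcm _).mul (hdm _)).mul (hdm _)).aestronglyMeasurable, hEc, zero_mul, mul_zero]
  -- diagonal term, same row
  have key2 : ∀ i j : Fin n,
      ∫ ω, (c (j - i) ω * u j * d j ω) * (c (j - i) ω * u j * d j ω) ∂μ
        = (σ2:ℝ) * u j ^ 2 := by
    intro i j
    have hI0 : IndepFun (c (j - i)) (d j) μ :=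
      hindep.indepFun (show (Sum.inl (j - i) : Fin n ⊕ Fin n) ≠ Sum.inr j by simp)
    have hI : IndepFun (fun ω => c (j - i) ω * c (j - i) ω)
        (fun ω => d j ω * d j ω) μ :=
      hI0.comp (measurable_id.mul measurable_id) (measurable_id.mul measurable_id)
    have h1 : ∫ ω, (c (j - i) ω * u j * d j ω) * (c (j - i) ω * u j * d j ω) ∂μ
        = (u j * u j) * ∫ ω, (c (j - i) ω * c (j - i) ω) * (d j ω * d j ω) ∂μ := by
      rw [← integral_const_mul]
      congr 1
      funext ω
      ring
    rw [h1, hI.integral_fun_mul_eq_mul_integral ((hcm _).mul (hcm _)).aestronglyMeasurable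
      ((hdm _).mul (hdm _)).aestronglyMeasurable, hEc2, hEd2, mul_one]
    ring
  -- expansion of the product integral
  have hyy : ∀ i i' : Fin n, ∫ ω, y i ω * y i' ω ∂μ
      = ∑ j, ∑ k, ∫ ω, (c (j - i) ω * u j * d j ω) * (c (k - i') ω * u k * d k ω) ∂μ := by
    intro i i'
    simp only [hy]
    rw [show (fun ω => (∑ j, c (j - i) ω * u j * d j ω) * (∑ k, c (k - i') ω * u k * d k ω))
        = fun ω => ∑ j, ∑ k, (c (j - i) ω * u j * d j ω) * (c (k - i') ω * u k * d k ω)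
      from funext fun ω => by rw [Finset.sum_mul_sum]]
    rw [integral_finset_sum _ fun j _ => integrable_finset_sum _ fun k _ => hmul i i' j k]
    exact Finset.sum_congr rfl fun j _ => integral_finset_sum _ fun k _ => hmul i i' j k
  constructor
  · intro i i' hii'
    simp only [rcov]
    rw [hE0 i, hE0 i', zero_mul, sub_zero, hyy i i']
    refine Finset.sum_eq_zero fun j _ => Finset.sum_eq_zero fun k _ => ?_
    by_cases hjk : j = k
    · subst hjk
      exact key1 i i' j hii'
    · exact key0 i i' j k hjk
  · intro i
    have hyL2 : MemLp (y i) 2 μ := by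
      rw [hy i]
      exact memLp_finset_sum _ fun j _ => htL2 i j
    rw [variance_eq_sub hyL2]
    have hsq : (y i ^ 2 : Ω → ℝ) = fun ω => y i ω * y i ω := by
      funext ω
      simp [pow_two]
    simp only [hsq]
    rw [hyy i i, hE0 i]
    have hrow : ∀ j : Fin n,
        ∑ k, ∫ ω, (c (j - i) ω * u j * d j ω) * (c (k - i) ω * u k * d k ω) ∂μ
          = (σ2:ℝ) * u j ^ 2 := by
      intro j
      rw [Finset.sum_eq_single j]
      · exact key2 i j
      · intro k _ hkj
        exact key0 i i j k fun h => hkj h.symm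
      · intro h
        exact absurd (Finset.mem_univ j) h
    simp only [hrow]
    rw [← Finset.mul_sum]
    ring
end

section
/- Let W_1, ..., W_L ∈ ℂ^{n×n}, b ∈ ℂⁿ, and let X ⊂ ℂⁿ be a bounded set. Then there exist bias vectors β_1, ..., β_L ∈ ℂⁿ such that for all x ∈ X, the network f_{W_L,β_L} ∘ ... ∘ f_{W_1,β_1}(x) with f_{W_i,β_i}(x) = ReLU(W_i x + β_i) equals ReLU(W_L W_{L−1} ··· W_1 x + b). In other words, on any bounded set, intermediate ReLUs can be made inactive by suitable bias shifts so the network computes a single ReLU of a matrix product. -/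
/-- Componentwise complex ReLU: `ReLU(z) = max(0, Re z) + i·max(0, Im z)`. -/
noncomputable def creluC {n : ℕ} (z : EuclideanSpace ℂ (Fin n)) : EuclideanSpace ℂ (Fin n) :=
  WithLp.toLp 2 (fun i => Complex.mk (max 0 (z i).re) (max 0 (z i).im))

/-- The deep ReLU network `f_{W_L,β_L} ∘ ⋯ ∘ f_{W_1,β_1}` (0-indexed), where
`f_{W,β}(x) = ReLU(Wx + β)`. -/
noncomputable def reluNet {n : ℕ} (W : ℕ → Matrix (Fin n) (Fin n) ℂ)
    (β : ℕ → EuclideanSpace ℂ (Fin n)) : ℕ → EuclideanSpace ℂ (Fin n) → EuclideanSpace ℂ (Fin n)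
  | 0, x => x
  | (L + 1), x => creluC (Matrix.toEuclideanLin (W L) (reluNet W β L x) + β L)

/-- The ordered matrix product `W_{L} ⋯ W_1` (0-indexed: `W (L-1) * ⋯ * W 0`). -/
noncomputable def matProd {n : ℕ} (W : ℕ → Matrix (Fin n) (Fin n) ℂ) : ℕ → Matrix (Fin n) (Fin n) ℂ
  | 0 => 1
  | (L + 1) => W L * matProd W L

lemma crelu_id {n : ℕ} (z : EuclideanSpace ℂ (Fin n))
    (h : ∀ i, 0 ≤ (z i).re ∧ 0 ≤ (z i).im) : creluC z = z := by
  ext i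
  obtain ⟨h1, h2⟩ := h i
  simp [creluC, Complex.ext_iff, max_eq_right h1, max_eq_right h2]

lemma coord_le_norm {n : ℕ} (z : EuclideanSpace ℂ (Fin n)) (i : Fin n) : ‖z i‖ ≤ ‖z‖ := by
  rw [EuclideanSpace.norm_eq]
  calc ‖z i‖ = Real.sqrt (‖z i‖ ^ 2) := by rw [Real.sqrt_sq (norm_nonneg _)]
    _ ≤ _ := by
        apply Real.sqrt_le_sqrt
        exact Finset.single_le_sum (fun j _ => sq_nonneg ‖z j‖) (Finset.mem_univ i)

lemma toEucl_mul {n : ℕ} (A B : Matrix (Fin n) (Fin n) ℂ) (v : EuclideanSpace ℂ (Fin n)) :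
    Matrix.toEuclideanLin (A * B) v = Matrix.toEuclideanLin A (Matrix.toEuclideanLin B v) := by
  simp [Matrix.toEuclideanLin_apply, Matrix.mulVec_mulVec]

/-- Vector with all coordinates `Ω`. -/
noncomputable def onesV (n : ℕ) (Ω : ℝ) : EuclideanSpace ℂ (Fin n) := WithLp.toLp 2 (fun _ => Complex.mk Ω Ω)

/-- Offsets: `0` at layer `0`, `Ω·1ₙ` afterwards. -/
noncomputable def cV (n : ℕ) (Ω : ℝ) : ℕ → EuclideanSpace ℂ (Fin n) :=
  fun j => if j = 0 then 0 else onesV n Ω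

/-- The bias vectors. -/
noncomputable def βV (n L : ℕ) (W : ℕ → Matrix (Fin n) (Fin n) ℂ)
    (b : EuclideanSpace ℂ (Fin n)) (Ω : ℝ) : ℕ → EuclideanSpace ℂ (Fin n) :=
  fun j => (if j = L - 1 then b else onesV n Ω) - Matrix.toEuclideanLin (W j) (cV n Ω j)

/-- Bias-shift lemma: on any bounded set `X ⊆ ℂⁿ`, there are biases `β_1,…,β_L` making
all intermediate ReLUs inactive, so that the `L`-layer ReLU network with matrices
`W_1,…,W_L` computes `x ↦ ReLU(W_L ⋯ W_1 x + b)` on `X`. -/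
theorem exists_bias_relu_net_eq_relu_prod {n L : ℕ} (hL : 1 ≤ L)
    (W : ℕ → Matrix (Fin n) (Fin n) ℂ) (b : EuclideanSpace ℂ (Fin n))
    (X : Set (EuclideanSpace ℂ (Fin n))) (hX : Bornology.IsBounded X) :
    ∃ β : ℕ → EuclideanSpace ℂ (Fin n), ∀ x ∈ X,
      reluNet W β L x = creluC (Matrix.toEuclideanLin (matProd W L) x + b) := by
  obtain ⟨Ω, hbound⟩ : ∃ Ω : ℝ, ∀ k, k < L + 1 → ∀ x ∈ X,
      ‖Matrix.toEuclideanLin (matProd W k) x‖ ≤ Ω := by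
    obtain ⟨R, hR⟩ := hX.exists_norm_le
    refine ⟨∑ k ∈ Finset.range (L + 1),
      ‖LinearMap.toContinuousLinearMap ((Matrix.toEuclideanLin (matProd W k) : _ →ₗ[ℂ] _))‖
        * max R 0, fun k hk x hx => ?_⟩
    have h1 : ‖Matrix.toEuclideanLin (matProd W k) x‖ ≤
        ‖LinearMap.toContinuousLinearMap ((Matrix.toEuclideanLin (matProd W k) : _ →ₗ[ℂ] _))‖
          * max R 0 := by
      have h2 := (LinearMap.toContinuousLinearMap
        ((Matrix.toEuclideanLin (matProd W k) : _ →ₗ[ℂ] _))).le_opNorm x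
      rw [LinearMap.coe_toContinuousLinearMap'] at h2
      exact h2.trans (mul_le_mul_of_nonneg_left
        ((hR x hx).trans (le_max_left _ _)) (norm_nonneg _))
    exact h1.trans (Finset.single_le_sum (f := fun k =>
      ‖LinearMap.toContinuousLinearMap ((Matrix.toEuclideanLin (matProd W k) : _ →ₗ[ℂ] _))‖
        * max R 0)
      (fun j _ => mul_nonneg (norm_nonneg _) (le_max_right _ _)) (Finset.mem_range.mpr hk))
  refine ⟨βV n L W b Ω, ?_⟩
  have key : ∀ j, j < L → ∀ x ∈ X,
      reluNet W (βV n L W b Ω) j x = Matrix.toEuclideanLin (matProd W j) x + cV n Ω j := by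
    intro j
    induction j with
    | zero =>
      intro _ x _
      simp [reluNet, matProd, cV, Matrix.toEuclideanLin_apply]
    | succ j ih =>
      intro hj x hx
      have hjL : j < L := Nat.lt_of_succ_lt hj
      have hjne : j ≠ L - 1 := by omega
      have hrec := ih hjL x hx
      have hval : Matrix.toEuclideanLin (W j) (reluNet W (βV n L W b Ω) j x) + βV n L W b Ω j =
          Matrix.toEuclideanLin (matProd W (j + 1)) x + onesV n Ω := by
        rw [hrec, βV, if_neg hjne, map_add]
        have h3 : Matrix.toEuclideanLin (matProd W (j + 1)) x =
            Matrix.toEuclideanLin (W j) (Matrix.toEuclideanLin (matProd W j) x) := by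
          rw [show matProd W (j + 1) = W j * matProd W j from rfl, toEucl_mul]
        rw [h3]; abel
      have hpos : ∀ i, 0 ≤ ((Matrix.toEuclideanLin (matProd W (j + 1)) x + onesV n Ω) i).re ∧
          0 ≤ ((Matrix.toEuclideanLin (matProd W (j + 1)) x + onesV n Ω) i).im := by
        intro i
        have hnorm : ‖Matrix.toEuclideanLin (matProd W (j + 1)) x‖ ≤ Ω :=
          hbound (j + 1) (by omega) x hx
        have hcoord := (coord_le_norm (Matrix.toEuclideanLin (matProd W (j + 1)) x) i).trans hnorm
        set v := Matrix.toEuclideanLin (matProd W (j + 1)) x with hv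
        have hre := abs_le.mp ((Complex.abs_re_le_norm (v i)).trans hcoord)
        have him := abs_le.mp ((Complex.abs_im_le_norm (v i)).trans hcoord)
        have happ : (v + onesV n Ω) i = v i + Complex.mk Ω Ω := rfl
        rw [happ]
        constructor
        · rw [Complex.add_re, show (Complex.mk Ω Ω).re = Ω from rfl]
          linarith [hre.1]
        · rw [Complex.add_im, show (Complex.mk Ω Ω).im = Ω from rfl]
          linarith [him.1]
      rw [show reluNet W (βV n L W b Ω) (j + 1) x =
        creluC (Matrix.toEuclideanLin (W j) (reluNet W (βV n L W b Ω) j x) + βV n L W b Ω j)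
        from rfl, hval, crelu_id _ hpos, cV]
      simp
  intro x hx
  obtain ⟨M, rfl⟩ : ∃ M, L = M + 1 := ⟨L - 1, by omega⟩
  have hrec := key M (Nat.lt_succ_self M) x hx
  rw [show reluNet W (βV n (M + 1) W b Ω) (M + 1) x =
    creluC (Matrix.toEuclideanLin (W M) (reluNet W (βV n (M + 1) W b Ω) M x)
      + βV n (M + 1) W b Ω M) from rfl, hrec, βV]
  simp only [Nat.add_sub_cancel, if_pos rfl]
  congr 1
  rw [map_add]
  have h4 : Matrix.toEuclideanLin (matProd W (M + 1)) x =
      Matrix.toEuclideanLin (W M) (Matrix.toEuclideanLin (matProd W M) x) := by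
    rw [show matProd W (M + 1) = W M * matProd W M from rfl, toEucl_mul]
  rw [h4]; abel
end

section
/- Let k divide n, and set r_j = 1 for j ∈ {k, 2k, ..., n} and r_j = 0 otherwise. Then for each i ∈ {1,...,n}, the k×k Toeplitz block with entries T^{(i)}_{s,t} = r_{(i + t − s) mod n} (formed from the subsequence of the periodic extension of r as in the circulant construction) is a permutation matrix, and in particular is invertible. -/
/-- The key invertibility step of the rank-based circulant decomposition: with `k ∣ n`
and `r_j = 1` iff `j` is a multiple of `k` (so `r` is `n`-periodic), every `k×k`
Toeplitz block `T^{(i)}_{s,t} = r_{(i + t − s) mod n}` (for `i ∈ {1,…,n}`) is a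
permutation matrix, hence invertible. -/
theorem toeplitz_block_is_permutation (n k : ℕ) (hk : 0 < k) (hdvd : k ∣ n)
    (r : ℕ → ℂ) (hr : ∀ j, r j = if k ∣ j then 1 else 0)
    (i : ℕ) (hi1 : 1 ≤ i) (hin : i ≤ n)
    (T : Matrix (Fin k) (Fin k) ℂ)
    (hT : ∀ s t : Fin k, T s t = r ((i + (t : ℕ) + n - (s : ℕ)) % n)) :
    (∃ σ : Equiv.Perm (Fin k), ∀ s t : Fin k, T s t = if σ s = t then 1 else 0) ∧
      IsUnit T := by
  haveI : NeZero k := ⟨hk.ne'⟩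
  have hn : 0 < n := lt_of_lt_of_le hi1 hin
  have hkn : k ≤ n := Nat.le_of_dvd hn hdvd
  have hrem : i % k < k := Nat.mod_lt _ hk
  have hdiv : i = k * (i / k) + i % k := (Nat.div_add_mod i k).symm
  have hkey : ∀ m : ℕ, m + (k - i % k) + i = m + k * (i / k + 1) := by
    intro m
    have h1 : k * (i / k + 1) = k * (i / k) + k := by ring
    omega
  set σ : Equiv.Perm (Fin k) :=
    { toFun := fun s => ⟨((s : ℕ) + (k - i % k)) % k, Nat.mod_lt _ hk⟩
      invFun := fun t => ⟨((t : ℕ) + i) % k, Nat.mod_lt _ hk⟩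
      left_inv := by
        intro s
        apply Fin.ext
        show (((s : ℕ) + (k - i % k)) % k + i) % k = (s : ℕ)
        rw [Nat.mod_add_mod, hkey, Nat.add_mul_mod_self_left, Nat.mod_eq_of_lt s.isLt]
      right_inv := by
        intro t
        apply Fin.ext
        show (((t : ℕ) + i) % k + (k - i % k)) % k = (t : ℕ)
        rw [Nat.mod_add_mod]
        have h2 : (t : ℕ) + i + (k - i % k) = (t : ℕ) + (k - i % k) + i := by omega
        rw [h2, hkey, Nat.add_mul_mod_self_left, Nat.mod_eq_of_lt t.isLt] } with hσ
  -- equality of naturals below k is detected in `ZMod k`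
  have cast_inj : ∀ a b : ℕ, a < k → b < k → ((a : ZMod k) = (b : ZMod k) ↔ a = b) := by
    intro a b ha hb
    constructor
    · intro h
      have := congrArg ZMod.val h
      rwa [ZMod.val_cast_of_lt ha, ZMod.val_cast_of_lt hb] at this
    · intro h; rw [h]
  have hn0 : ((n : ZMod k)) = 0 := (ZMod.natCast_eq_zero_iff n k).mpr hdvd
  have key : ∀ s t : Fin k, (k ∣ (i + (t : ℕ) + n - (s : ℕ)) % n) ↔ σ s = t := by
    intro s t
    have hs : (s : ℕ) ≤ i + (t : ℕ) + n := by
      have := s.isLt; omega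
    rw [Nat.dvd_mod_iff hdvd, ← ZMod.natCast_eq_zero_iff]
    have lhs : ((i + (t : ℕ) + n - (s : ℕ) : ℕ) : ZMod k)
        = (i : ZMod k) + (t : ℕ) - (s : ℕ) := by
      rw [Nat.cast_sub hs]
      push_cast
      rw [hn0]
      ring
    rw [lhs]
    have hσs : ((σ s : Fin k) : ℕ) = ((s : ℕ) + (k - i % k)) % k := rfl
    constructor
    · intro h
      apply Fin.ext
      rw [← cast_inj _ _ (σ s).isLt t.isLt, hσs, ZMod.natCast_mod, Nat.cast_add,
        Nat.cast_sub (le_of_lt hrem), ZMod.natCast_self, ZMod.natCast_mod]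
      have : (t : ZMod k) = (s : ZMod k) - (i : ℕ) := by
        have := sub_eq_zero.mp h  -- (i + t) - s = 0 → i + t = s
        linear_combination this
      rw [this]; ring
    · intro h
      have ht : (t : ZMod k) = (s : ZMod k) - (i : ℕ) := by
        rw [← h]
        rw [show ((σ s : Fin k) : ℕ) = ((s : ℕ) + (k - i % k)) % k from rfl]
        rw [ZMod.natCast_mod, Nat.cast_add, Nat.cast_sub (le_of_lt hrem),
          ZMod.natCast_self, ZMod.natCast_mod]
        ring
      rw [ht]; ring
  have hTσ : ∀ s t : Fin k, T s t = if σ s = t then 1 else 0 := by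
    intro s t
    rw [hT s t, hr]
    exact if_congr (key s t) rfl rfl
  refine ⟨⟨σ, hTσ⟩, ?_⟩
  have hTeq : T = σ.permMatrix ℂ := by
    ext s t
    rw [hTσ s t, Equiv.Perm.permMatrix, PEquiv.toMatrix_apply, Equiv.toPEquiv_apply]
    simp [eq_comm]
  rw [hTeq, Matrix.isUnit_iff_isUnit_det, Matrix.det_permutation]
  rcases Int.units_eq_one_or σ.sign with h | h <;> simp [h]
end

section
/- Let U ∈ ℂ^{n×n} be a matrix whose last n−k columns are zero, with k dividing n. Then there exist diagonal matrices D_1,...,D_k, a circulant matrix R and the diagonal projection O (O_{ii}=1 for i≤k, else 0) such that U = (Σ_{i=1}^k D_i S^{i−1}) R O, where S is the cyclic shift matrix. -/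
/-- The `n×n` cyclic shift matrix: `S p q = 1` iff `p ≡ q + 1 (mod n)`. -/
def cyclicShift (n : ℕ) [NeZero n] : Matrix (Fin n) (Fin n) ℂ :=
  fun p q => if p = q + 1 then 1 else 0

/-- The circulant matrix `circ(r)`, whose `(p,q)` entry is `r_{(p−q) mod n}`. -/
def circMat {n : ℕ} [NeZero n] (r : Fin n → ℂ) : Matrix (Fin n) (Fin n) ℂ :=
  fun p q => r (p - q)

open Fin.NatCast

lemma cyclicShift_pow (n : ℕ) [NeZero n] (m : ℕ) (p q : Fin n) :
    ((cyclicShift n) ^ m) p q = if p = q + (m : Fin n) then 1 else 0 := by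
  induction m generalizing q with
  | zero => simp [Matrix.one_apply, eq_comm]
  | succ m ih =>
    rw [pow_succ, Matrix.mul_apply]
    simp only [cyclicShift, mul_ite, mul_one, mul_zero]
    rw [Finset.sum_ite_eq' Finset.univ (q + 1), if_pos (Finset.mem_univ _), ih,
      show ((m+1:ℕ):Fin n) = (m:Fin n)+1 by push_cast; ring,
      show q + ((m:Fin n)+1) = q + 1 + (m:Fin n) by abel]

lemma castmod {k n : ℕ} [NeZero k] (h : k ∣ n) (x : ℕ) : ((x % n : ℕ) : ZMod k) = x := by
  conv_rhs => rw [← Nat.div_add_mod x n]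
  push_cast
  simp [(ZMod.natCast_eq_zero_iff n k).2 h]

lemma natinj {k : ℕ} [NeZero k] {a b : ℕ} (ha : a < k) (hb : b < k)
    (h : (a : ZMod k) = (b : ZMod k)) : a = b := by
  have := congrArg ZMod.val h
  rwa [ZMod.val_cast_of_lt ha, ZMod.val_cast_of_lt hb] at this

/-- Any matrix `U` whose last `n−k` columns vanish (with `k ∣ n`) factors exactly as
`U = (Σ_{i=1}^k D_i S^{i−1}) R O` for some diagonal matrices `D_i`, some circulant
matrix `R`, and the diagonal projection `O` (`O_{ii} = 1` for `i ≤ k`, else `0`). -/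
theorem factor_zero_columns_matrix {n k : ℕ} [NeZero n] (hkn : k ∣ n)
    (U : Matrix (Fin n) (Fin n) ℂ)
    (hU : ∀ p q : Fin n, k ≤ (q : ℕ) → U p q = 0) :
    ∃ (D : Fin k → Fin n → ℂ) (r : Fin n → ℂ),
      U = (∑ i : Fin k, Matrix.diagonal (D i) * (cyclicShift n) ^ (i : ℕ)) * circMat r *
        Matrix.diagonal (fun i : Fin n => if (i : ℕ) < k then 1 else 0) := by
  have hn : 0 < n := Nat.pos_of_ne_zero (NeZero.ne n)
  have hk : 0 < k := by
    rcases Nat.eq_zero_or_pos k with h | h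
    · subst h; exact absurd (Nat.eq_zero_of_zero_dvd hkn) (NeZero.ne n)
    · exact h
  have hkle : k ≤ n := Nat.le_of_dvd hn hkn
  haveI : NeZero k := ⟨hk.ne'⟩
  have hn0 : ((n : ℕ) : ZMod k) = 0 := (ZMod.natCast_eq_zero_iff n k).2 hkn
  set D : Fin k → Fin n → ℂ := fun i p =>
    U p ⟨(p.val + k - i.val) % k, lt_of_lt_of_le (Nat.mod_lt _ hk) hkle⟩ with hD
  refine ⟨D, fun j => if k ∣ j.val then 1 else 0, ?_⟩
  ext p q
  rw [Matrix.mul_diagonal]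
  by_cases hq : (q : ℕ) < k
  · rw [if_pos hq, mul_one, Matrix.mul_apply]
    simp only [Matrix.sum_apply, Matrix.diagonal_mul, cyclicShift_pow,
      mul_ite, mul_one, mul_zero, Finset.sum_mul, ite_mul, zero_mul]
    rw [Finset.sum_comm]
    have hcond : ∀ (i : Fin k) (t : Fin n),
        (p = t + (((i:ℕ)):Fin n)) ↔ t = p - (((i:ℕ)):Fin n) := by
      intro i t
      constructor <;> intro h <;> simp [h]
    simp_rw [hcond]
    simp only [Finset.sum_ite_eq', Finset.mem_univ, if_true]
    simp only [circMat]
    -- goal : U p q = Σ_i D i p * (if k ∣ (p - ↑↑i - q).val then 1 else 0)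
    set i₀ : Fin k := ⟨(p.val + k - q.val) % k, Nat.mod_lt _ hk⟩ with hi₀def
    have hi0 : ((i₀ : Fin k).val : ZMod k) = (p.val : ZMod k) - (q.val : ZMod k) := by
      show (((p.val + k - q.val) % k : ℕ) : ZMod k) = _
      rw [castmod (dvd_refl k), Nat.cast_sub (by omega : q.val ≤ p.val + k), Nat.cast_add,
        ZMod.natCast_self]
      ring
    have hzmod : ∀ i : Fin k, (((p - (((i:ℕ)):Fin n) - q).val : ℕ) : ZMod k)
        = (p.val : ZMod k) - (i.val : ZMod k) - (q.val : ZMod k) := by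
      intro i
      have hiv : ((((i:ℕ)):Fin n)).val = (i:ℕ) :=
        Fin.val_cast_of_lt (lt_of_lt_of_le i.isLt hkle)
      have e1 : (p - (((i:ℕ)):Fin n) - q).val
          = (n - q.val + ((n - ((((i:ℕ)):Fin n)).val + p.val) % n)) % n := by
        rw [Fin.sub_def, Fin.sub_def]
      rw [e1, castmod hkn, Nat.cast_add, castmod hkn, Nat.cast_add,
        Nat.cast_sub (le_of_lt q.isLt), Nat.cast_sub (le_of_lt (Fin.isLt _)), hiv, hn0]
      ring
    have hcond2 : ∀ i : Fin k, (k ∣ ((p - (((i:ℕ)):Fin n) - q).val)) ↔ i = i₀ := by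
      intro i
      rw [← ZMod.natCast_eq_zero_iff, hzmod i]
      constructor
      · intro h
        refine Fin.ext (natinj i.isLt i₀.isLt ?_)
        rw [hi0]; linear_combination -h
      · rintro rfl
        rw [hi0]; ring
    simp_rw [hcond2, mul_ite, mul_one, mul_zero]
    rw [Finset.sum_ite_eq' Finset.univ i₀, if_pos (Finset.mem_univ _)]
    have hindex : (⟨(p.val + k - i₀.val) % k,
        lt_of_lt_of_le (Nat.mod_lt _ hk) hkle⟩ : Fin n) = q := by
      refine Fin.ext (natinj (Nat.mod_lt _ hk) hq ?_)
      show (((p.val + k - i₀.val) % k : ℕ) : ZMod k) = (q.val : ZMod k)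
      rw [castmod (dvd_refl k), Nat.cast_sub (by omega : i₀.val ≤ p.val + k), Nat.cast_add,
        ZMod.natCast_self, hi0]
      ring
    rw [hD]
    simp only []
    rw [hindex]
  · rw [if_neg hq, mul_zero, hU p q (le_of_not_gt hq)]
end
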